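/- arXiv:1606.07703 — 4 statements merged into one kernel-verified Lean document; each statement's English description precedes it below -/
import Mathlib

section
/- There exists a constant C < ∞ such that for every vertical subgroup W of ℍ and every set A ⊆ ℍ, the Lebesgue measure of the vertical projection satisfies ℒ²(π_W(A)) ≤ C·ℋ³(A), where ℋ³ is the 3-dimensional Hausdorff measure with respect to d_ℍ. -/
open MeasureTheory ENNReal

/-- The first Heisenberg group, identified with `ℂ × ℝ`. -/
abbrev HeisC : Type := ℂ × ℝ

/-- The Heisenberg product on `ℂ × ℝ`. -/
noncomputable def hmulC (p q : HeisC) : HeisC :=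
  (p.1 + q.1, p.2 + q.2 + ((starRingEnd ℂ) p.1 * q.1).im / 2)

/-- The Heisenberg inverse. -/
noncomputable def hinvC (p : HeisC) : HeisC := (-p.1, -p.2)

/-- The homogeneous norm `‖(z,t)‖ = max {|z|, |t|^{1/2}}`. -/
noncomputable def hnormC (p : HeisC) : ℝ := max (‖p.1‖) (Real.sqrt |p.2|)

/-- The Heisenberg distance `d_ℍ(p,q) = ‖q⁻¹ · p‖`. -/
noncomputable def dHC (p q : HeisC) : ℝ := hnormC (hmulC (hinvC q) p)

/-- Diameter of a set with respect to `d_ℍ`, valued in `ℝ≥0∞`. -/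
noncomputable def ediamH (S : Set HeisC) : ℝ≥0∞ :=
  ⨆ p ∈ S, ⨆ q ∈ S, ENNReal.ofReal (dHC p q)

/-- The `3`-dimensional Hausdorff measure on `ℍ` with respect to `d_ℍ`. -/
noncomputable def H3 (A : Set HeisC) : ℝ≥0∞ :=
  ⨆ (δ : ℝ) (_ : 0 < δ),
    ⨅ (U : ℕ → Set HeisC) (_ : A ⊆ ⋃ n, U n)
      (_ : ∀ n, ediamH (U n) ≤ ENNReal.ofReal δ),
      ∑' n, ediamH (U n) ^ 3

/-- Coordinate of the horizontal part of `p` along the unit vector `v`. -/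
noncomputable def sC (v : ℂ) (p : HeisC) : ℝ := ((starRingEnd ℂ) v * p.1).re

/-- Coordinate of the horizontal part of `p` along `i·v`. -/
noncomputable def uC (v : ℂ) (p : HeisC) : ℝ := ((starRingEnd ℂ) (Complex.I * v) * p.1).re

/-- The vertical projection onto `W = (ℝ·v) × ℝ`, in the coordinates `(s,t)` which identify
`W` with `ℝ²`. -/
noncomputable def piWcoord (v : ℂ) (p : HeisC) : ℝ × ℝ :=
  (sC v p, p.2 - sC v p * uC v p / 2)

lemma strip_volume (a c u d L : ℝ) (hL : 0 ≤ L) :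
    volume {x : ℝ × ℝ | |x.1 - a| ≤ d ∧ |x.2 - (c + (a - x.1) * u)| ≤ L}
      ≤ ENNReal.ofReal (2 * d) * ENNReal.ofReal (2 * L) := by
  set S : Set (ℝ × ℝ) := {x : ℝ × ℝ | |x.1 - a| ≤ d ∧ |x.2 - (c + (a - x.1) * u)| ≤ L} with hS
  have hclosed : IsClosed S := by
    have : S = {x : ℝ × ℝ | |x.1 - a| ≤ d} ∩ {x | |x.2 - (c + (a - x.1) * u)| ≤ L} := rfl
    rw [this]
    exact (isClosed_le (by continuity) continuous_const).inter
      (isClosed_le (by continuity) continuous_const)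
  calc volume S = ∫⁻ x, volume (Prod.mk x ⁻¹' S) := by
        rw [Measure.volume_eq_prod, Measure.prod_apply hclosed.measurableSet]
    _ ≤ ∫⁻ x, (Set.Icc (a - d) (a + d)).indicator (fun _ => ENNReal.ofReal (2 * L)) x := by
        refine lintegral_mono fun x => ?_
        by_cases hx : |x - a| ≤ d
        · have hxmem : x ∈ Set.Icc (a - d) (a + d) := by
            rw [Set.mem_Icc]; rw [abs_le] at hx; constructor <;> linarith [hx.1, hx.2]
          rw [Set.indicator_of_mem hxmem]
          have hsub : Prod.mk x ⁻¹' S ⊆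
              Set.Icc (c + (a - x) * u - L) (c + (a - x) * u + L) := by
            intro y hy
            have := hy.2
            rw [abs_le] at this
            rw [Set.mem_Icc]; constructor <;> linarith [this.1, this.2]
          calc volume (Prod.mk x ⁻¹' S) ≤ _ := measure_mono hsub
            _ = ENNReal.ofReal (2 * L) := by rw [Real.volume_Icc]; ring_nf
        · have : Prod.mk x ⁻¹' S = ∅ := by
            ext y; simp only [Set.mem_preimage, Set.mem_empty_iff_false, iff_false]
            intro hy; exact hx hy.1
          rw [this]; simp
    _ = ENNReal.ofReal (2 * L) * volume (Set.Icc (a - d) (a + d)) :=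
        lintegral_indicator_const measurableSet_Icc _
    _ = ENNReal.ofReal (2 * d) * ENNReal.ofReal (2 * L) := by
        rw [Real.volume_Icc, mul_comm]; congr 1; ring

lemma dist_facts (v : ℂ) (hv : ‖v‖ = 1) (p q : HeisC) (d : ℝ) (hd : 0 ≤ d)
    (h : dHC p q ≤ d) :
    |sC v p - sC v q| ≤ d ∧
    |(p.2 - sC v p * uC v p / 2) -
      ((q.2 - sC v q * uC v q / 2) + (sC v q - sC v p) * uC v q)| ≤ 3 / 2 * d ^ 2 := by
  simp only [dHC, hnormC, hmulC, hinvC, max_le_iff] at h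
  obtain ⟨h1, h2⟩ := h
  have hz : ‖p.1 - q.1‖ ≤ d := by
    rwa [show p.1 - q.1 = -q.1 + p.1 by ring]
  have ht : |(-q.2 + p.2 + ((starRingEnd ℂ) (-q.1) * p.1).im / 2)| ≤ d ^ 2 := by
    have := Real.sq_sqrt (abs_nonneg (-q.2 + p.2 + ((starRingEnd ℂ) (-q.1) * p.1).im / 2))
    nlinarith [Real.sqrt_nonneg |(-q.2 + p.2 + ((starRingEnd ℂ) (-q.1) * p.1).im / 2)|]
  set wp : ℂ := (starRingEnd ℂ) v * p.1 with hwp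
  set wq : ℂ := (starRingEnd ℂ) v * q.1 with hwq
  have huC : ∀ r : HeisC, uC v r = ((starRingEnd ℂ) v * r.1).im := by
    intro r
    simp [uC, map_mul, Complex.conj_I, Complex.mul_re, Complex.mul_im]
    ring
  have habs1 : ‖wp - wq‖ ≤ d := by
    have : wp - wq = (starRingEnd ℂ) v * (p.1 - q.1) := by rw [hwp, hwq]; ring
    rw [this, norm_mul, Complex.norm_conj, hv, one_mul]
    exact hz
  have hre : |wp.re - wq.re| ≤ d := by
    have := Complex.abs_re_le_norm (wp - wq)
    rw [Complex.sub_re] at this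
    exact this.trans habs1
  have him : |wp.im - wq.im| ≤ d := by
    have := Complex.abs_im_le_norm (wp - wq)
    rw [Complex.sub_im] at this
    exact this.trans habs1
  have hiden : (starRingEnd ℂ) wq * wp = (starRingEnd ℂ) q.1 * p.1 := by
    have hv1 : v * (starRingEnd ℂ) v = 1 := by
      rw [Complex.mul_conj]
      norm_cast
      rw [Complex.normSq_eq_norm_sq, hv]; norm_num
    calc (starRingEnd ℂ) wq * wp
        = (v * (starRingEnd ℂ) v) * ((starRingEnd ℂ) q.1 * p.1) := by
          rw [hwq, hwp, map_mul, Complex.conj_conj]; ring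
      _ = (starRingEnd ℂ) q.1 * p.1 := by rw [hv1, one_mul]
  have him2 : ((starRingEnd ℂ) q.1 * p.1).im = wq.re * wp.im - wq.im * wp.re := by
    rw [← hiden, Complex.mul_im]
    simp [Complex.conj_re, Complex.conj_im]
    ring
  have himneg : ((starRingEnd ℂ) (-q.1) * p.1).im = -((starRingEnd ℂ) q.1 * p.1).im := by
    rw [map_neg, neg_mul, Complex.neg_im]
  set a := wq.re; set b := wq.im; set x := wp.re; set y := wp.im
  have hsp : sC v p = x := rfl
  have hsq : sC v q = a := rfl
  have hup : uC v p = y := huC p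
  have huq : uC v q = b := huC q
  rw [himneg, him2] at ht
  have ht' : |p.2 - q.2 - (a * y - b * x) / 2| ≤ d ^ 2 := by
    have : -q.2 + p.2 + -(a * y - b * x) / 2 = p.2 - q.2 - (a * y - b * x) / 2 := by ring
    rwa [this] at ht
  have hprod : |(a - x) * (y - b)| ≤ d * d := by
    rw [abs_mul]
    have h1 : |a - x| ≤ d := by rwa [abs_sub_comm] at hre
    have h2 : |y - b| ≤ d := him
    exact mul_le_mul h1 h2 (abs_nonneg _) hd
  refine ⟨by rw [hsp, hsq]; exact hre, ?_⟩
  rw [hsp, hsq, hup, huq]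
  rw [abs_le] at ht' hprod ⊢
  constructor <;> nlinarith [ht'.1, ht'.2, hprod.1, hprod.2]

lemma key_bound (v : ℂ) (hv : ‖v‖ = 1) (S : Set HeisC) :
    volume (piWcoord v '' S) ≤ ENNReal.ofReal 6 * ediamH S ^ 3 := by
  rcases S.eq_empty_or_nonempty with rfl | ⟨q, hq⟩
  · simp
  by_cases hfin : ediamH S = ⊤
  · rw [hfin, ENNReal.top_pow (by norm_num), ENNReal.mul_top (by simp)]
    exact le_top
  · set d : ℝ := (ediamH S).toReal with hdd
    have hd : 0 ≤ d := ENNReal.toReal_nonneg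
    have hdist : ∀ p ∈ S, dHC p q ≤ d := by
      intro p hp
      have h1 : ENNReal.ofReal (dHC p q) ≤ ediamH S :=
        le_iSup₂_of_le p hp (le_iSup₂_of_le q hq le_rfl)
      exact (ENNReal.ofReal_le_iff_le_toReal hfin).mp h1
    have hsub : piWcoord v '' S ⊆
        {x : ℝ × ℝ | |x.1 - sC v q| ≤ d ∧
          |x.2 - ((q.2 - sC v q * uC v q / 2) + (sC v q - x.1) * uC v q)| ≤ 3 / 2 * d ^ 2} := by
      rintro _ ⟨p, hp, rfl⟩
      exact dist_facts v hv p q d hd (hdist p hp)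
    calc volume (piWcoord v '' S) ≤ _ := measure_mono hsub
      _ ≤ ENNReal.ofReal (2 * d) * ENNReal.ofReal (2 * (3 / 2 * d ^ 2)) :=
          strip_volume (sC v q) (q.2 - sC v q * uC v q / 2) (uC v q) d (3 / 2 * d ^ 2)
            (by positivity)
      _ = ENNReal.ofReal 6 * ENNReal.ofReal (d ^ 3) := by
          rw [← ENNReal.ofReal_mul (by positivity), ← ENNReal.ofReal_mul (by norm_num)]
          congr 1; ring
      _ = ENNReal.ofReal 6 * ediamH S ^ 3 := by
          rw [← ENNReal.ofReal_toReal hfin, ← hdd, ← ENNReal.ofReal_pow hd]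

/-- There is a constant `C < ∞` such that for every vertical subgroup `W` of `ℍ` and every
set `A ⊆ ℍ`, the Lebesgue measure of the vertical projection satisfies
`ℒ²(π_W(A)) ≤ C · ℋ³(A)`, where `ℋ³` is the 3-dimensional Hausdorff measure for `d_ℍ`. -/
theorem vertical_projection_measure_bound :
    ∃ C : ℝ, 0 < C ∧ ∀ (v : ℂ), ‖v‖ = 1 → ∀ A : Set HeisC,
      volume (piWcoord v '' A) ≤ ENNReal.ofReal C * H3 A := by
  refine ⟨6, by norm_num, fun v hv A => ?_⟩
  have h6 : (ENNReal.ofReal 6) ≠ 0 := by simp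
  have hH : (⨅ (U : ℕ → Set HeisC) (_ : A ⊆ ⋃ n, U n)
      (_ : ∀ n, ediamH (U n) ≤ ENNReal.ofReal 1), ∑' n, ediamH (U n) ^ 3) ≤ H3 A := by
    refine le_iSup_of_le (1 : ℝ) ?_
    exact le_iSup_of_le one_pos le_rfl
  refine le_trans ?_ (mul_le_mul_right hH _)
  rw [mul_comm, ← ENNReal.div_le_iff_le_mul (Or.inl h6) (Or.inl ENNReal.ofReal_ne_top)]
  refine le_iInf fun U => le_iInf fun hU => le_iInf fun _ => ?_
  rw [ENNReal.div_le_iff_le_mul (Or.inl h6) (Or.inl ENNReal.ofReal_ne_top), mul_comm]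
  calc volume (piWcoord v '' A)
      ≤ volume (⋃ n, piWcoord v '' U n) := by
        refine measure_mono ?_
        rw [← Set.image_iUnion]
        exact Set.image_mono hU
    _ ≤ ∑' n, volume (piWcoord v '' U n) := measure_iUnion_le _
    _ ≤ ∑' n, ENNReal.ofReal 6 * ediamH (U n) ^ 3 :=
        ENNReal.tsum_le_tsum fun n => key_bound v hv (U n)
    _ = ENNReal.ofReal 6 * ∑' n, ediamH (U n) ^ 3 := ENNReal.tsum_mul_left
end

section
/- Let K ⊂ ℝ² be a 1-rectifiable set with 0 < ℋ¹(K) < ∞. Then there exists a set G ⊆ S¹ of full ℋ¹-measure in S¹ such that for every ℋ¹-measurable subset F ⊆ K with ℋ¹(F) > 0 and every e ∈ G, the orthogonal projection π_e(F) = {x·e : x ∈ F} has positive ℋ¹-measure. -/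
open MeasureTheory Set NNReal ENNReal Filter Topology

lemma deriv_approx {E : Type*} [NormedAddCommGroup E] [NormedSpace ℝ E]
    {g : ℝ → E} {d : E} {t : ℝ} (hg : HasDerivAt g d t) {ε : ℝ} (hε : 0 < ε) :
    ∃ m : ℕ, ∀ u : ℝ, |u - t| ≤ 1 / (m + 1) → ‖g u - g t - (u - t) • d‖ ≤ ε * |u - t| := by
  have h := (hasDerivAt_iff_isLittleO.1 hg).def hε
  rw [Metric.eventually_nhds_iff] at h
  obtain ⟨δ, hδ, hh⟩ := h
  obtain ⟨m, hm⟩ := exists_nat_one_div_lt hδ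
  refine ⟨m, fun u hu => ?_⟩
  have := hh (y := u) (by rw [Real.dist_eq]; exact lt_of_le_of_lt hu hm)
  simpa [Real.norm_eq_abs] using this

lemma vol_null_of_image_null {g : ℝ → ℝ} {d : ℝ → ℝ} {S : Set ℝ}
    (hg : ∀ t ∈ S, HasDerivAt g (d t) t) (hd : ∀ t ∈ S, d t ≠ 0)
    (h0 : volume (g '' S) = 0) : volume S = 0 := by
  classical
  set T : ℕ → ℕ → ℤ → Set ℝ := fun k m j =>
    {t | t ∈ S ∧ ∀ u : ℝ, |u - t| ≤ 1 / (m + 1) → |u - t| ≤ (k + 1) * |g u - g t|}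
      ∩ Set.Icc ((j : ℝ) / (m + 1)) ((j + 1 : ℝ) / (m + 1)) with hTdef
  have hcover : S ⊆ ⋃ (k : ℕ) (m : ℕ) (j : ℤ), T k m j := by
    intro t ht
    obtain ⟨k, hk⟩ := exists_nat_one_div_lt (abs_pos.2 (hd t ht))
    have hε : (0:ℝ) < |d t| - 1 / (k + 1) := by linarith
    obtain ⟨m, hm⟩ := deriv_approx (hg t ht) hε
    have hm1 : (0:ℝ) < (m:ℝ) + 1 := by positivity
    have hk1 : (0:ℝ) < (k:ℝ) + 1 := by positivity
    refine Set.mem_iUnion.2 ⟨k, Set.mem_iUnion.2 ⟨m, Set.mem_iUnion.2 ⟨⌊t * ((m:ℝ) + 1)⌋, ⟨ht, ?_⟩, ?_⟩⟩⟩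
    · intro u hu
      have h1 := hm u hu
      have h2 : |(u - t) * d t| - |g u - g t| ≤ |g u - g t - (u - t) * d t| := by
        have := abs_sub_abs_le_abs_sub ((u - t) * d t) (g u - g t)
        have habs : |(u - t) * d t - (g u - g t)| = |g u - g t - (u - t) * d t| := abs_sub_comm _ _
        linarith
      have h3 : |u - t| * (1 / ((k:ℝ) + 1)) ≤ |g u - g t| := by
        rw [abs_mul] at h2
        rw [Real.norm_eq_abs, smul_eq_mul] at h1
        nlinarith [abs_nonneg (u - t)]
      calc |u - t| = ((k:ℝ) + 1) * (|u - t| * (1 / ((k:ℝ) + 1))) := by field_simp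
        _ ≤ ((k:ℝ) + 1) * |g u - g t| := by
            exact mul_le_mul_of_nonneg_left h3 (le_of_lt hk1)
    · constructor
      · rw [div_le_iff₀ hm1]
        exact Int.floor_le _
      · rw [le_div_iff₀ hm1]
        have := Int.lt_floor_add_one (t * ((m:ℝ) + 1))
        push_cast
        linarith
  have hT : ∀ k m j, volume (T k m j) = 0 := by
    intro k m j
    have hsub : T k m j ⊆ S := fun t ht => ht.1.1
    have hlen : ((j:ℝ) + 1) / ((m:ℝ) + 1) - (j:ℝ) / ((m:ℝ) + 1) = 1 / ((m:ℝ) + 1) := by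
      field_simp; ring
    have key : ∀ u ∈ T k m j, ∀ v ∈ T k m j, |u - v| ≤ ((k:ℝ) + 1) * |g u - g v| := by
      rintro u ⟨⟨huS, hu⟩, huI⟩ v ⟨⟨hvS, hv⟩, hvI⟩
      have hdist : |v - u| ≤ 1 / ((m:ℝ) + 1) := by
        rw [abs_sub_le_iff]
        constructor <;> [skip; skip] <;> · obtain ⟨a1, a2⟩ := huI; obtain ⟨b1, b2⟩ := hvI; linarith
      have := hu v hdist
      rw [abs_sub_comm v u, abs_sub_comm (g v) (g u)] at this
      exact this
    set ψ : ℝ → ℝ := fun y => if h : ∃ t, t ∈ T k m j ∧ g t = y then Classical.choose h else 0 with hψdef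
    have hψmem : ∀ y, (h : ∃ t, t ∈ T k m j ∧ g t = y) → ψ y ∈ T k m j ∧ g (ψ y) = y := by
      intro y h
      simp only [hψdef, dif_pos h]
      exact Classical.choose_spec h
    have hψg : ∀ u ∈ T k m j, ψ (g u) = u := by
      intro u hu
      obtain ⟨h1, h2⟩ := hψmem (g u) ⟨u, hu, rfl⟩
      have h3 := key _ h1 _ hu
      rw [h2] at h3
      simp only [sub_self, abs_zero, mul_zero] at h3
      have := abs_nonneg (ψ (g u) - u)
      have h4 : |ψ (g u) - u| = 0 := le_antisymm h3 this
      have := abs_eq_zero.1 h4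
      linarith [sub_eq_zero.1 this]
    have himg : ψ '' (g '' T k m j) = T k m j := by
      apply Set.Subset.antisymm
      · rintro y ⟨y', ⟨u, hu, rfl⟩, rfl⟩
        rw [hψg u hu]; exact hu
      · intro u hu
        exact ⟨g u, Set.mem_image_of_mem _ hu, hψg u hu⟩
    have hlip : LipschitzOnWith ((k:ℝ≥0) + 1) ψ (g '' T k m j) := by
      rw [lipschitzOnWith_iff_dist_le_mul]
      rintro y1 ⟨u1, hu1, rfl⟩ y2 ⟨u2, hu2, rfl⟩
      rw [hψg u1 hu1, hψg u2 hu2, Real.dist_eq, Real.dist_eq]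
      have := key u1 hu1 u2 hu2
      push_cast
      exact this
    refine le_antisymm ?_ (zero_le)
    calc volume (T k m j) = μH[1] (T k m j) := by rw [MeasureTheory.hausdorffMeasure_real]
      _ = μH[1] (ψ '' (g '' T k m j)) := by rw [himg]
      _ ≤ (((k:ℝ≥0) + 1 : ℝ≥0) : ℝ≥0∞) ^ (1:ℝ) * μH[1] (g '' T k m j) :=
          hlip.hausdorffMeasure_image_le zero_le_one
      _ ≤ (((k:ℝ≥0) + 1 : ℝ≥0) : ℝ≥0∞) * μH[1] (g '' S) := by
          rw [ENNReal.rpow_one]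
          exact mul_le_mul_right (measure_mono (Set.image_mono hsub)) _
      _ = (((k:ℝ≥0) + 1 : ℝ≥0) : ℝ≥0∞) * volume (g '' S) := by
          rw [MeasureTheory.hausdorffMeasure_real]
      _ = 0 := by rw [h0, mul_zero]
  refine measure_mono_null hcover ?_
  exact measure_iUnion_null fun k => measure_iUnion_null fun m => measure_iUnion_null fun j => hT k m j

lemma sard_null {f : ℝ → EuclideanSpace ℝ (Fin 2)} {Z : Set ℝ}
    (hZ : ∀ t ∈ Z, HasDerivAt f 0 t) : μH[1] (f '' Z) = 0 := by
  have hcoverM : Z = ⋃ M : ℕ, Z ∩ Icc (-(M:ℝ)) M := by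
    apply Subset.antisymm
    · intro t ht
      obtain ⟨M, hM⟩ := exists_nat_ge |t|
      exact Set.mem_iUnion.2 ⟨M, ht, by rw [Set.mem_Icc, ← abs_le]; exact hM⟩
    · exact Set.iUnion_subset fun M => Set.inter_subset_left
  rw [hcoverM, Set.image_iUnion]
  refine measure_iUnion_null fun M => ?_
  have key : ∀ k : ℕ, μH[1] (f '' (Z ∩ Icc (-(M:ℝ)) M)) ≤
      ENNReal.ofReal ((2 * M + 1) * (1 / (k + 1))) := by
    intro k
    have hk1 : (0:ℝ) < (k:ℝ) + 1 := by positivity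
    set W : ℕ → Set ℝ := fun m =>
      {t | t ∈ Z ∧ ∀ u : ℝ, |u - t| ≤ 1 / (m + 1) → ‖f u - f t‖ ≤ |u - t| / (k + 1)} with hW
    have hWmono : Monotone W := by
      intro m m' hmm t ht
      refine ⟨ht.1, fun u hu => ht.2 u (le_trans hu ?_)⟩
      have h1 : (0:ℝ) < (m:ℝ) + 1 := by positivity
      have h2 : (m:ℝ) + 1 ≤ (m':ℝ) + 1 := by
        have := (Nat.cast_le (α := ℝ)).2 hmm; linarith
      exact one_div_le_one_div_of_le h1 h2
    have hcover : Z ⊆ ⋃ m, W m := by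
      intro t ht
      have hk2 : (0:ℝ) < 1 / ((k:ℝ) + 1) := by positivity
      obtain ⟨m, hm⟩ := deriv_approx (hZ t ht) hk2
      refine Set.mem_iUnion.2 ⟨m, ht, fun u hu => ?_⟩
      have := hm u hu
      simp only [smul_zero, sub_zero] at this
      refine le_trans this (le_of_eq ?_)
      ring
    have hmono2 : Monotone fun m => f '' (W m ∩ Icc (-(M:ℝ)) M) := by
      intro m m' hmm
      exact Set.image_mono (Set.inter_subset_inter_left _ (hWmono hmm))
    have himgsub : f '' (Z ∩ Icc (-(M:ℝ)) M) ⊆ ⋃ m, f '' (W m ∩ Icc (-(M:ℝ)) M) := by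
      rw [← Set.image_iUnion]
      apply Set.image_mono
      rw [← Set.iUnion_inter]
      exact Set.inter_subset_inter_left _ hcover
    refine le_trans (measure_mono himgsub) ?_
    rw [hmono2.measure_iUnion]
    refine iSup_le fun m => ?_
    have hm1 : (0:ℝ) < (m:ℝ) + 1 := by positivity
    set I : ℕ → Set ℝ := fun j => Icc (-(M:ℝ) + j / ((m:ℝ) + 1)) (-(M:ℝ) + ((j:ℝ) + 1) / ((m:ℝ) + 1)) with hI
    set N : ℕ := 2 * M * (m + 1) + 1 with hN
    have hsubJ : W m ∩ Icc (-(M:ℝ)) M ⊆ ⋃ j ∈ Finset.range N, W m ∩ I j := by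
      rintro t ⟨htW, ht1, ht2⟩
      have h0 : (0:ℝ) ≤ (t + M) * ((m:ℝ) + 1) := by nlinarith
      set j : ℕ := ⌊(t + (M:ℝ)) * ((m:ℝ) + 1)⌋.toNat with hj
      have hjf : (j : ℝ) = ((⌊(t + (M:ℝ)) * ((m:ℝ) + 1)⌋ : ℤ) : ℝ) := by
        have h5 : ((j:ℤ)) = ⌊(t + (M:ℝ)) * ((m:ℝ) + 1)⌋ :=
          Int.toNat_of_nonneg (Int.floor_nonneg.2 h0)
        exact_mod_cast congrArg (Int.cast : ℤ → ℝ) h5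
      have h2 : ((j:ℝ)) ≤ (t + M) * ((m:ℝ)+1) := by rw [hjf]; exact Int.floor_le _
      have h4 : (t + M) * ((m:ℝ)+1) < (j:ℝ) + 1 := by
        rw [hjf]; exact Int.lt_floor_add_one _
      refine Set.mem_iUnion₂.2 ⟨j, ?_, htW, ?_, ?_⟩
      · rw [Finset.mem_range]
        have h3 : (t + M) * ((m:ℝ)+1) ≤ 2 * M * ((m:ℝ)+1) := by nlinarith
        have h5 : (j : ℝ) < (N : ℝ) := by
          rw [hN]; push_cast; linarith
        exact_mod_cast h5
      · have hdd : (j:ℝ) / ((m:ℝ)+1) ≤ t + M := (div_le_iff₀ hm1).2 h2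
        linarith [hdd]
      · have hdd2 : t + M ≤ ((j:ℝ)+1) / ((m:ℝ)+1) := (le_div_iff₀ hm1).2 (le_of_lt h4)
        linarith [hdd2]
    have hbound : ∀ j, μH[1] (f '' (W m ∩ I j)) ≤
        ENNReal.ofReal (((k:ℝ)+1)⁻¹) * ENNReal.ofReal (1 / ((m:ℝ)+1)) := by
      intro j
      have hlen0 : (-(M:ℝ) + ((j:ℝ)+1)/((m:ℝ)+1)) - (-(M:ℝ) + (j:ℝ)/((m:ℝ)+1))
          = 1/((m:ℝ)+1) := by field_simp; ring
      set Kk : ℝ≥0 := ⟨((k:ℝ)+1)⁻¹, by positivity⟩ with hKk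
      have hlip : LipschitzOnWith Kk f (W m ∩ I j) := by
        rw [lipschitzOnWith_iff_dist_le_mul]
        rintro u ⟨huW, huI⟩ v ⟨hvW, hvI⟩
        obtain ⟨a1, a2⟩ := huI; obtain ⟨b1, b2⟩ := hvI
        have hlen : |v - u| ≤ 1 / ((m:ℝ) + 1) := by
          rw [abs_sub_le_iff]; constructor <;> linarith
        have hfv := huW.2 v hlen
        rw [dist_comm, dist_eq_norm, Real.dist_eq, abs_sub_comm u v]
        calc ‖f v - f u‖ ≤ |v - u| / ((k:ℝ)+1) := hfv
          _ = (Kk : ℝ) * |v - u| := by rw [div_eq_inv_mul]; rfl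
      calc μH[1] (f '' (W m ∩ I j))
          ≤ (Kk : ℝ≥0∞) ^ (1:ℝ) * μH[1] (W m ∩ I j) :=
            hlip.hausdorffMeasure_image_le zero_le_one
        _ ≤ (Kk : ℝ≥0∞) * μH[1] (I j) := by
            rw [ENNReal.rpow_one]
            exact mul_le_mul_right (measure_mono Set.inter_subset_right) _
        _ = ENNReal.ofReal (((k:ℝ)+1)⁻¹) * ENNReal.ofReal (1 / ((m:ℝ)+1)) := by
            rw [MeasureTheory.hausdorffMeasure_real, hI]
            rw [Real.volume_Icc, hlen0]
            rw [show ((k:ℝ)+1)⁻¹ = (Kk:ℝ) from rfl, ENNReal.ofReal_coe_nnreal]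
    calc μH[1] (f '' (W m ∩ Icc (-(M:ℝ)) M))
        ≤ μH[1] (⋃ j ∈ Finset.range N, f '' (W m ∩ I j)) := by
          refine measure_mono ?_
          refine le_trans (Set.image_mono hsubJ) ?_
          rw [Set.image_iUnion₂]
      _ ≤ ∑ j ∈ Finset.range N, μH[1] (f '' (W m ∩ I j)) := measure_biUnion_finset_le _ _
      _ ≤ (Finset.range N).card •
            (ENNReal.ofReal (((k:ℝ)+1)⁻¹) * ENNReal.ofReal (1 / ((m:ℝ)+1))) :=
          Finset.sum_le_card_nsmul _ _ _ (fun j _ => hbound j)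
      _ ≤ ENNReal.ofReal ((2 * M + 1) * (1 / (k + 1))) := by
          rw [Finset.card_range, nsmul_eq_mul, ← ENNReal.ofReal_natCast N,
            ← ENNReal.ofReal_mul (by positivity), ← ENNReal.ofReal_mul (by positivity)]
          refine ENNReal.ofReal_le_ofReal ?_
          rw [hN]
          push_cast
          have hb1 : (0:ℝ) < ((k:ℝ)+1) := by positivity
          have hb2 : (0:ℝ) < ((m:ℝ)+1) := by positivity
          rw [inv_eq_one_div, one_div_mul_one_div, mul_one_div, mul_one_div,
            div_le_div_iff₀ (by positivity) (by positivity)]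
          nlinarith [Nat.cast_nonneg (α := ℝ) M, Nat.cast_nonneg (α := ℝ) m, Nat.cast_nonneg (α := ℝ) k]
  refine le_antisymm ?_ (zero_le)
  have hr : Tendsto (fun k:ℕ => (2*(M:ℝ)+1)*(1/((k:ℝ)+1))) atTop (𝓝 0) := by
    simpa using tendsto_one_div_add_atTop_nhds_zero_nat.const_mul (2*(M:ℝ)+1)
  have htend : Tendsto (fun k:ℕ => ENNReal.ofReal ((2*(M:ℝ)+1)*(1/((k:ℝ)+1)))) atTop (𝓝 0) := by
    simpa using ENNReal.tendsto_ofReal hr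
  exact ge_of_tendsto' htend key


noncomputable def dirVec (θ : ℝ) : EuclideanSpace ℝ (Fin 2) := !₂[Real.cos θ, Real.sin θ]

lemma dirVec_norm (θ : ℝ) : ‖dirVec θ‖ = 1 := by
  have h : ∑ i : Fin 2, ‖dirVec θ i‖ ^ 2 = 1 := by
    rw [Fin.sum_univ_two]
    show ‖Real.cos θ‖ ^ 2 + ‖Real.sin θ‖ ^ 2 = 1
    rw [Real.norm_eq_abs, Real.norm_eq_abs, sq_abs, sq_abs, add_comm]
    exact Real.sin_sq_add_cos_sq θ
  rw [EuclideanSpace.norm_eq, h, Real.sqrt_one]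

lemma dirVec_surj {v : EuclideanSpace ℝ (Fin 2)} (hv : ‖v‖ = 1) : ∃ θ, dirVec θ = v := by
  have hsq : v 0 ^ 2 + v 1 ^ 2 = 1 := by
    have h := hv
    rw [EuclideanSpace.norm_eq] at h
    simp [Fin.sum_univ_two] at h
    have h0 : (0:ℝ) ≤ v 0 ^ 2 + v 1 ^ 2 := by positivity
    nlinarith [Real.sq_sqrt h0, Real.sqrt_nonneg (v 0 ^ 2 + v 1 ^ 2)]
  set z : ℂ := ⟨v 0, v 1⟩ with hz
  have habs : ‖z‖ = 1 := by
    have : ‖z‖ ^ 2 = 1 := by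
      rw [Complex.sq_norm, Complex.normSq_mk]; nlinarith [hsq]
    nlinarith [norm_nonneg z]
  have hzne : z ≠ 0 := by
    intro h; rw [h] at habs; simp at habs
  refine ⟨Complex.arg z, ?_⟩
  have hcos : Real.cos (Complex.arg z) = v 0 := by
    rw [Complex.cos_arg hzne, habs]; simp [hz]
  have hsin : Real.sin (Complex.arg z) = v 1 := by
    rw [Complex.sin_arg, habs]; simp [hz]
  ext i
  fin_cases i <;> simp [dirVec, hcos, hsin]

lemma dirVec_lipschitz : LipschitzWith 2 dirVec := by
  have hcos : LipschitzWith 1 Real.cos := by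
    apply lipschitzWith_of_nnnorm_deriv_le Real.differentiable_cos
    intro x
    rw [Real.deriv_cos]
    simp only [← NNReal.coe_le_coe, coe_nnnorm, Real.norm_eq_abs, NNReal.coe_one]
    rw [abs_neg]; exact Real.abs_sin_le_one x
  have hsin : LipschitzWith 1 Real.sin := by
    apply lipschitzWith_of_nnnorm_deriv_le Real.differentiable_sin
    intro x
    rw [Real.deriv_sin]
    simp only [← NNReal.coe_le_coe, coe_nnnorm, Real.norm_eq_abs, NNReal.coe_one]
    exact Real.abs_cos_le_one x
  apply LipschitzWith.of_dist_le_mul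
  intro a b
  have h1 : dist (Real.cos a) (Real.cos b) ≤ dist a b := by
    simpa using hcos.dist_le_mul a b
  have h2 : dist (Real.sin a) (Real.sin b) ≤ dist a b := by
    simpa using hsin.dist_le_mul a b
  rw [EuclideanSpace.dist_eq]
  have hd0 : (0:ℝ) ≤ dist a b := dist_nonneg
  have : Real.sqrt (∑ i : Fin 2, dist (dirVec a i) (dirVec b i) ^ 2)
      ≤ Real.sqrt (2 * dist a b ^ 2) := by
    apply Real.sqrt_le_sqrt
    rw [Fin.sum_univ_two]
    have e0 : dirVec a 0 = Real.cos a := rfl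
    have e1 : dirVec a 1 = Real.sin a := rfl
    simp only [show ∀ x, dirVec x 0 = Real.cos x from fun _ => rfl,
      show ∀ x, dirVec x 1 = Real.sin x from fun _ => rfl]
    nlinarith [dist_nonneg (x := Real.cos a) (y := Real.cos b),
      dist_nonneg (x := Real.sin a) (y := Real.sin b)]
  refine le_trans this ?_
  rw [show (2:ℝ) * dist a b ^ 2 = (Real.sqrt 2 * dist a b)^2 from by
    rw [mul_pow, Real.sq_sqrt (by norm_num)]]
  rw [Real.sqrt_sq (by positivity)]
  have hs2 : Real.sqrt 2 ≤ 2 := by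
    nlinarith [Real.sq_sqrt (show (0:ℝ) ≤ 2 by norm_num), Real.sqrt_nonneg 2]
  calc Real.sqrt 2 * dist a b ≤ 2 * dist a b := by nlinarith [hd0]
    _ = ((2:ℝ≥0):ℝ) * dist a b := by norm_num

lemma inner_dirVec (w : EuclideanSpace ℝ (Fin 2)) (θ : ℝ) :
    (inner ℝ w (dirVec θ) : ℝ) = w 0 * Real.cos θ + w 1 * Real.sin θ := by
  rw [PiLp.inner_apply, Fin.sum_univ_two]
  simp [dirVec, RCLike.inner_apply, mul_comm]

lemma circle_section_null {a b : ℝ} (hab : ¬(a = 0 ∧ b = 0)) :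
    volume {θ : ℝ | a * Real.cos θ + b * Real.sin θ = 0} = 0 := by
  set g : ℝ → ℝ := fun θ => a * Real.cos θ + b * Real.sin θ with hg
  set d : ℝ → ℝ := fun θ => a * (-Real.sin θ) + b * Real.cos θ with hd
  have hder : ∀ θ, HasDerivAt g (d θ) θ := fun θ =>
    ((Real.hasDerivAt_cos θ).const_mul a).add ((Real.hasDerivAt_sin θ).const_mul b)
  apply vol_null_of_image_null (d := d) (fun t _ => hder t)
  · rintro t ht hd0
    simp only [Set.mem_setOf_eq] at ht
    simp only [hd] at hd0
    have h1 := Real.sin_sq_add_cos_sq t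
    apply hab
    constructor
    · linear_combination Real.cos t * ht - Real.sin t * hd0 - a * h1
    · linear_combination Real.sin t * ht + Real.cos t * hd0 - b * h1
  · refine measure_mono_null (fun y hy => ?_) (measure_singleton (0:ℝ))
    obtain ⟨t, ht, rfl⟩ := hy
    exact ht
lemma good_directions (f : ℝ → EuclideanSpace ℝ (Fin 2)) :
    ∀ᵐ θ : ℝ, volume {t : ℝ | DifferentiableAt ℝ f t ∧ deriv f t ≠ 0 ∧
      (inner ℝ (deriv f t) (dirVec θ) : ℝ) = 0} = 0 := by
  set s : Set (ℝ × ℝ) := {p | DifferentiableAt ℝ f p.2 ∧ deriv f p.2 ≠ 0 ∧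
    (inner ℝ (deriv f p.2) (dirVec p.1) : ℝ) = 0} with hs_def
  have hD : MeasurableSet {x : ℝ | DifferentiableAt ℝ f x} :=
    measurableSet_of_differentiableAt ℝ f
  have hderiv : Measurable (deriv f) := measurable_deriv f
  have hinner : Measurable fun p : ℝ × ℝ => (inner ℝ (deriv f p.2) (dirVec p.1) : ℝ) := by
    have h1 : Measurable fun p : ℝ × ℝ => deriv f p.2 := hderiv.comp measurable_snd
    have h2 : Measurable fun p : ℝ × ℝ => dirVec p.1 :=
      (dirVec_lipschitz.continuous.measurable).comp measurable_fst
    exact h1.inner h2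
  have hs : MeasurableSet s := by
    have e1 : s = (Prod.snd ⁻¹' {x : ℝ | DifferentiableAt ℝ f x}) ∩
        (((deriv f) ∘ Prod.snd) ⁻¹' ({0}ᶜ)) ∩
        ((fun p : ℝ × ℝ => (inner ℝ (deriv f p.2) (dirVec p.1) : ℝ)) ⁻¹' {0}) := by
      ext p
      simp only [hs_def, Set.mem_setOf_eq, Set.mem_inter_iff, Set.mem_preimage,
        Function.comp_apply, Set.mem_compl_iff, Set.mem_singleton_iff]
      tauto
    rw [e1]
    exact ((hD.preimage measurable_snd).inter
      ((hderiv.comp measurable_snd) (measurableSet_singleton 0).compl)).inter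
      (hinner (measurableSet_singleton 0))
  have hprod : (volume.prod volume) s = 0 := by
    rw [Measure.prod_apply_symm hs]
    have hzero : ∀ t : ℝ, volume ((fun θ => (θ, t)) ⁻¹' s) = 0 := by
      intro t
      by_cases hdt : DifferentiableAt ℝ f t ∧ deriv f t ≠ 0
      · have hsub : ((fun θ => (θ, t)) ⁻¹' s) ⊆
            {θ : ℝ | (deriv f t) 0 * Real.cos θ + (deriv f t) 1 * Real.sin θ = 0} := by
          intro θ hθ
          have h3 := hθ.2.2
          rwa [inner_dirVec] at h3
        refine measure_mono_null hsub (circle_section_null ?_)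
        rintro ⟨h0, h1⟩
        apply hdt.2
        ext i
        fin_cases i
        · exact h0
        · exact h1
      · have hempty : ((fun θ => (θ, t)) ⁻¹' s) = ∅ := by
          ext θ
          simp only [Set.mem_preimage, hs_def, Set.mem_setOf_eq, Set.mem_empty_iff_false,
            iff_false]
          intro h
          exact hdt ⟨h.1, h.2.1⟩
        rw [hempty, measure_empty]
    simp only [hzero]
    exact lintegral_zero
  have := MeasureTheory.Measure.measure_ae_null_of_prod_null hprod
  filter_upwards [this] with θ hθ
  exact hθ

/-- Let `K ⊂ ℝ²` be a 1-rectifiable set with `0 < ℋ¹(K) < ∞`.  Then there is a set of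
directions `G ⊆ S¹` of full `ℋ¹`-measure in `S¹` such that for every `ℋ¹`-measurable
`F ⊆ K` with `ℋ¹(F) > 0` and every `e ∈ G`, the orthogonal projection
`π_e(F) = {x·e : x ∈ F}` has positive `ℋ¹`-measure. -/
theorem projection_lemma (K : Set (EuclideanSpace ℝ (Fin 2)))
    (hrect : ∃ f : ℕ → ℝ → EuclideanSpace ℝ (Fin 2),
      (∀ n, ∃ C : NNReal, LipschitzWith C (f n)) ∧
      μH[1] (K \ ⋃ n, Set.range (f n)) = 0)
    (hpos : 0 < μH[1] K) (hfin : μH[1] K < ⊤) :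
    ∃ G : Set (EuclideanSpace ℝ (Fin 2)),
      G ⊆ {e | ‖e‖ = 1} ∧
      μH[1] ({e : EuclideanSpace ℝ (Fin 2) | ‖e‖ = 1} \ G) = 0 ∧
      ∀ F ⊆ K, MeasurableSet F → 0 < μH[1] F →
        ∀ e ∈ G, 0 < μH[1] ((fun x => (inner ℝ x e : ℝ)) '' F) := by
  obtain ⟨f, hflip, hnull⟩ := hrect
  choose C hC using hflip
  have hae : ∀ᵐ θ : ℝ, ∀ n, volume {t : ℝ | DifferentiableAt ℝ (f n) t ∧ deriv (f n) t ≠ 0 ∧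
      (inner ℝ (deriv (f n) t) (dirVec θ) : ℝ) = 0} = 0 :=
    ae_all_iff.2 fun n => good_directions (f n)
  set Θ : Set ℝ := {θ | ∀ n, volume {t : ℝ | DifferentiableAt ℝ (f n) t ∧ deriv (f n) t ≠ 0 ∧
      (inner ℝ (deriv (f n) t) (dirVec θ) : ℝ) = 0} = 0} with hΘdef
  have hΘ : volume Θᶜ = 0 := by
    have := ae_iff.1 hae
    exact this
  -- helper: Lipschitz images of null sets are H¹-null
  have himglip : ∀ n (X : Set ℝ), volume X = 0 → μH[1] (f n '' X) = 0 := by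
    intro n X hX
    refine le_antisymm ?_ (zero_le)
    calc μH[1] (f n '' X) ≤ ((C n : ℝ≥0∞)) ^ (1:ℝ) * μH[1] X :=
          (hC n).hausdorffMeasure_image_le zero_le_one X
      _ = 0 := by rw [MeasureTheory.hausdorffMeasure_real, hX, mul_zero]
  refine ⟨dirVec '' Θ, ?_, ?_, ?_⟩
  · rintro e ⟨θ, _, rfl⟩
    exact dirVec_norm θ
  · have hsub : {e : EuclideanSpace ℝ (Fin 2) | ‖e‖ = 1} \ dirVec '' Θ ⊆ dirVec '' Θᶜ := by
      rintro e ⟨he1, he2⟩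
      obtain ⟨θ, hθ⟩ := dirVec_surj he1
      exact ⟨θ, fun hθΘ => he2 ⟨θ, hθΘ, hθ⟩, hθ⟩
    refine measure_mono_null hsub ?_
    refine le_antisymm ?_ (zero_le)
    calc μH[1] (dirVec '' Θᶜ) ≤ ((2 : ℝ≥0) : ℝ≥0∞) ^ (1:ℝ) * μH[1] Θᶜ :=
          dirVec_lipschitz.hausdorffMeasure_image_le zero_le_one Θᶜ
      _ = 0 := by rw [MeasureTheory.hausdorffMeasure_real, hΘ, mul_zero]
  · intro F hFK hFmeas hFpos e he
    obtain ⟨θ, hθΘ, rfl⟩ := he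
    -- find a piece with positive measure
    have hex : ∃ n, 0 < μH[1] (F ∩ Set.range (f n)) := by
      by_contra hcon
      push_neg at hcon
      have hzero : ∀ n, μH[1] (F ∩ Set.range (f n)) = 0 :=
        fun n => le_antisymm (hcon n) (zero_le)
      have hFnull : μH[1] F = 0 := by
        have hsub : F ⊆ (K \ ⋃ n, Set.range (f n)) ∪ ⋃ n, F ∩ Set.range (f n) := by
          intro x hx
          by_cases hxr : x ∈ ⋃ n, Set.range (f n)
          · obtain ⟨n, hn⟩ := Set.mem_iUnion.1 hxr
            exact Or.inr (Set.mem_iUnion.2 ⟨n, hx, hn⟩)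
          · exact Or.inl ⟨hFK hx, hxr⟩
        exact measure_mono_null hsub
          (measure_union_null hnull (measure_iUnion_null hzero))
      exact absurd hFnull (ne_of_gt hFpos)
    obtain ⟨n, hn⟩ := hex
    set g : ℝ → EuclideanSpace ℝ (Fin 2) := f n with hgdef
    set A : Set ℝ := g ⁻¹' F with hAdef
    have hFA : F ∩ Set.range g ⊆ g '' A := by
      rintro x ⟨hxF, t, rfl⟩
      exact ⟨t, hxF, rfl⟩
    set B2 : Set ℝ := A ∩ {t | DifferentiableAt ℝ g t ∧
      (inner ℝ (deriv g t) (dirVec θ) : ℝ) ≠ 0} with hB2def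
    have hB2 : volume B2 ≠ 0 := by
      intro hB20
      set ND : Set ℝ := {t | ¬ DifferentiableAt ℝ g t} with hNDdef
      set B1 : Set ℝ := {t | DifferentiableAt ℝ g t ∧ deriv g t ≠ 0 ∧
        (inner ℝ (deriv g t) (dirVec θ) : ℝ) = 0} with hB1def
      set AB0 : Set ℝ := A ∩ {t | DifferentiableAt ℝ g t ∧ deriv g t = 0} with hAB0def
      have hND : volume ND = 0 := by
        have hdiff : ∀ᵐ t : ℝ, DifferentiableAt ℝ g t := (hC n).ae_differentiableAt
        exact ae_iff.1 hdiff
      have hB1 : volume B1 = 0 := hθΘ n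
      have hcoverA : A ⊆ ND ∪ B1 ∪ B2 ∪ AB0 := by
        intro t ht
        by_cases h1 : DifferentiableAt ℝ g t
        · by_cases h2 : (inner ℝ (deriv g t) (dirVec θ) : ℝ) = 0
          · by_cases h3 : deriv g t = 0
            · exact Or.inr ⟨ht, h1, h3⟩
            · exact Or.inl (Or.inl (Or.inr ⟨h1, h3, h2⟩))
          · exact Or.inl (Or.inr ⟨ht, h1, h2⟩)
        · exact Or.inl (Or.inl (Or.inl h1))
      have himg : μH[1] (g '' A) = 0 := by
        have hsub2 : g '' A ⊆ g '' ND ∪ g '' B1 ∪ g '' B2 ∪ g '' AB0 := by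
          refine le_trans (Set.image_mono (f := g) hcoverA) ?_
          rw [Set.image_union, Set.image_union, Set.image_union]
        refine measure_mono_null hsub2 ?_
        refine measure_union_null (measure_union_null (measure_union_null ?_ ?_) ?_) ?_
        · exact himglip n ND hND
        · exact himglip n B1 hB1
        · exact himglip n B2 hB20
        · refine sard_null (fun t ht => ?_)
          have h4 := ht.2.1.hasDerivAt
          rwa [ht.2.2] at h4
      exact absurd (measure_mono_null hFA himg) (ne_of_gt hn)
    -- projection has positive measure
    set pr : ℝ → ℝ := fun t => (inner ℝ (g t) (dirVec θ) : ℝ) with hprdef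
    have hder : ∀ t ∈ B2, HasDerivAt pr ((inner ℝ (deriv g t) (dirVec θ) : ℝ)) t := by
      intro t ht
      have h1 : HasDerivAt g (deriv g t) t := ht.2.1.hasDerivAt
      have h2 := (innerSL ℝ (dirVec θ)).hasFDerivAt.comp_hasDerivAt t h1
      have h3 : pr = fun u => (inner ℝ (dirVec θ) (g u) : ℝ) :=
        funext fun u => real_inner_comm _ _
      rw [h3, real_inner_comm]
      exact h2
    have hne : ∀ t ∈ B2, (inner ℝ (deriv g t) (dirVec θ) : ℝ) ≠ 0 := fun t ht => ht.2.2
    have himgpos : volume (pr '' B2) ≠ 0 :=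
      fun h0 => hB2 (vol_null_of_image_null hder hne h0)
    have hsubimg : pr '' B2 ⊆ (fun x => (inner ℝ x (dirVec θ) : ℝ)) '' F := by
      rintro y ⟨t, ht, rfl⟩
      exact ⟨g t, ht.1, rfl⟩
    have hfinal : 0 < volume ((fun x => (inner ℝ x (dirVec θ) : ℝ)) '' F) :=
      lt_of_lt_of_le (zero_lt_iff.2 himgpos) (measure_mono hsubimg)
    rwa [MeasureTheory.hausdorffMeasure_real]
end

section
/- Let φ : ℝ² → ℝ be locally Lipschitz, let c ∈ ℝ, and let B ⊂ ℝ² have Lebesgue measure zero. Define γ_t(s) = (s, (c/2)s² + φ(0,t)s + t). Then for almost every t ∈ ℝ, one has γ_t(s) ∉ B for almost every s ∈ ℝ. -/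
open MeasureTheory Set

/-- If `g : ℝ → ℝ` maps a set into a null set and has a nonzero derivative at each
point of that set, the set is null. -/
lemma aux_null_preimage (g : ℝ → ℝ) (N : Set ℝ) (hN : volume N = 0) :
    volume {t : ℝ | g t ∈ N ∧ ∃ a : ℝ, a ≠ 0 ∧ HasDerivAt g a t} = 0 := by
  set E : ℕ → ℤ → Set ℝ := fun n k =>
    {t | g t ∈ N ∧ (∀ u : ℝ, |u - t| ≤ 1 / (n + 1) → |u - t| ≤ (n + 1) * |g u - g t|) ∧
      t ∈ Set.Icc ((k : ℝ) / (n + 1)) ((k + 1) / (n + 1))} with hE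
  have hnpos : ∀ n : ℕ, (0 : ℝ) < n + 1 := fun n => by positivity
  -- each piece has an antilipschitz bound between any two of its points
  have hanti : ∀ n k, ∀ u ∈ E n k, ∀ v ∈ E n k, |u - v| ≤ (n + 1) * |g u - g v| := by
    intro n k u hu v hv
    have hIcc : |u - v| ≤ 1 / (n + 1) := by
      obtain ⟨-, -, hu1, hu2⟩ := hu
      obtain ⟨-, -, hv1, hv2⟩ := hv
      have hdiff : ((k:ℝ) + 1) / (n + 1) - (k:ℝ) / (n + 1) = 1 / (n + 1) := by
        field_simp
        ring
      rw [abs_sub_le_iff]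
      constructor <;> linarith
    exact hv.2.1 u hIcc
  have key : ∀ n k, volume (E n k) = 0 := by
    intro n k
    have hA : volume (g '' E n k) = 0 :=
      measure_mono_null (by rintro y ⟨t, ht, rfl⟩; exact ht.1) hN
    have hinj : Set.InjOn g (E n k) := by
      intro u hu v hv huv
      have := hanti n k u hu v hv
      rw [huv, sub_self, abs_zero, mul_zero] at this
      have := abs_nonpos_iff.1 this
      linarith [sub_eq_zero.1 this]
    set h : ℝ → ℝ := Function.invFunOn g (E n k) with hh
    have himg : h '' (g '' E n k) = E n k := hinj.invFunOn_image Set.Subset.rfl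
    have hlip : LipschitzOnWith (⟨n + 1, by positivity⟩ : NNReal) h (g '' E n k) := by
      apply LipschitzOnWith.of_dist_le_mul
      rintro y₁ ⟨t₁, ht₁, rfl⟩ y₂ ⟨t₂, ht₂, rfl⟩
      have h₁mem : h (g t₁) ∈ E n k := Function.invFunOn_apply_mem ht₁
      have h₂mem : h (g t₂) ∈ E n k := Function.invFunOn_apply_mem ht₂
      have h₁eq : g (h (g t₁)) = g t₁ := Function.invFunOn_apply_eq ht₁
      have h₂eq : g (h (g t₂)) = g t₂ := Function.invFunOn_apply_eq ht₂
      have := hanti n k _ h₁mem _ h₂mem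
      rw [h₁eq, h₂eq] at this
      rw [Real.dist_eq, Real.dist_eq]
      exact this
    have hH := hlip.hausdorffMeasure_image_le (zero_le_one)
    rw [himg, MeasureTheory.hausdorffMeasure_real] at hH
    rw [hA, mul_zero] at hH
    exact le_zero_iff.mp hH
  -- the set is covered by the pieces
  have cover : {t : ℝ | g t ∈ N ∧ ∃ a : ℝ, a ≠ 0 ∧ HasDerivAt g a t} ⊆ ⋃ (n : ℕ) (k : ℤ), E n k := by
    rintro t ⟨htN, a, ha, hda⟩
    have habs : 0 < |a| := abs_pos.2 ha
    have hlo := hda.isLittleO.def (show (0:ℝ) < |a| / 2 by positivity)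
    rw [Metric.eventually_nhds_iff] at hlo
    obtain ⟨ε, hε, hball⟩ := hlo
    obtain ⟨n, hn⟩ := exists_nat_gt (max (1 / ε) (2 / |a|))
    have hn1 : (1:ℝ) / ε < n + 1 := lt_trans (lt_of_le_of_lt (le_max_left _ _) hn) (by linarith)
    have hn2 : (2:ℝ) / |a| < n + 1 := lt_trans (lt_of_le_of_lt (le_max_right _ _) hn) (by linarith)
    have hεn : 1 / ((n:ℝ) + 1) < ε := by
      rw [div_lt_iff₀ (hnpos n)]
      rw [div_lt_iff₀ hε] at hn1
      linarith
    have han : 1 / ((n:ℝ) + 1) ≤ |a| / 2 := by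
      rw [div_le_div_iff₀ (hnpos n) two_pos]
      rw [div_lt_iff₀ habs] at hn2
      linarith
    refine Set.mem_iUnion.2 ⟨n, Set.mem_iUnion.2 ⟨⌊t * (n + 1)⌋, htN, ?_, ?_⟩⟩
    · intro u hu
      have hdist : dist u t < ε := by
        rw [Real.dist_eq]; exact lt_of_le_of_lt hu hεn
      have hb := hball hdist
      simp only [ContinuousLinearMap.smulRight_apply, ContinuousLinearMap.one_apply,
        smul_eq_mul, Real.norm_eq_abs] at hb
      -- hb : |g u - g t - (u - t) * a| ≤ |a| / 2 * |u - t|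
      have h1 : |a| * |u - t| - |a| / 2 * |u - t| ≤ |g u - g t| := by
        have h2 : |(u - t) * a| - |g u - g t| ≤ |g u - g t - (u - t) * a| := by
          calc |(u - t) * a| - |g u - g t| ≤ |(u - t) * a - (g u - g t)| := by
                have := abs_sub_abs_le_abs_sub ((u - t) * a) (g u - g t)
                linarith
          _ = |g u - g t - (u - t) * a| := abs_sub_comm _ _
        rw [abs_mul] at h2
        have hcomm : |u - t| * |a| = |a| * |u - t| := mul_comm _ _
        linarith
      have h3 : (1 / ((n:ℝ) + 1)) * |u - t| ≤ |g u - g t| := by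
        nlinarith [abs_nonneg (u - t)]
      rw [div_mul_eq_mul_div, div_le_iff₀ (hnpos n), one_mul] at h3
      linarith [h3]
    · constructor
      · rw [div_le_iff₀ (hnpos n)]
        exact_mod_cast Int.floor_le (t * (n + 1))
      · rw [le_div_iff₀ (hnpos n)]
        have := Int.lt_floor_add_one (t * (n + 1))
        push_cast
        linarith
  exact measure_mono_null cover (measure_iUnion_null fun n => measure_iUnion_null fun k => key n k)
lemma aux_ae_diff (ψ : ℝ → ℝ) (hψ : LocallyLipschitz ψ) :
    ∀ᵐ t : ℝ, DifferentiableAt ℝ ψ t := by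
  have H : ∀ x : ℝ, ∃ r > 0, ∃ K : NNReal, LipschitzOnWith K ψ (Metric.ball x r) := by
    intro x
    obtain ⟨K, t, ht, hl⟩ := hψ x
    obtain ⟨r, hr, hball⟩ := Metric.mem_nhds_iff.1 ht
    exact ⟨r, hr, K, hl.mono hball⟩
  choose r hr K hK using H
  obtain ⟨u, hu_count, hu⟩ :=
    TopologicalSpace.countable_cover_nhds (fun x : ℝ => Metric.ball_mem_nhds x (hr x))
  rw [ae_iff]
  have hsub : {t : ℝ | ¬ DifferentiableAt ℝ ψ t} ⊆
      ⋃ x ∈ u, (Metric.ball x (r x) ∩ {t : ℝ | ¬ DifferentiableAt ℝ ψ t}) := by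
    intro t ht
    have : t ∈ ⋃ x ∈ u, Metric.ball x (r x) := by rw [hu]; trivial
    obtain ⟨x, hx, htx⟩ := Set.mem_iUnion₂.1 this
    exact Set.mem_biUnion hx ⟨htx, ht⟩
  refine measure_mono_null hsub ((measure_biUnion_null_iff hu_count).2 fun x _ => ?_)
  have hae : ∀ᵐ y : ℝ, y ∈ Metric.ball x (r x) → DifferentiableAt ℝ ψ y := by
    filter_upwards [(hK x).ae_differentiableWithinAt_of_mem_of_real (μ := volume)] with y hy hyb
    exact (hy hyb).differentiableAt (Metric.isOpen_ball.mem_nhds hyb)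
  rw [ae_iff] at hae
  refine measure_mono_null ?_ hae
  rintro y ⟨hyb, hyd⟩
  exact fun h => hyd (h hyb)

/-- Let `φ : ℝ² → ℝ` be locally Lipschitz, `c ∈ ℝ`, and let `B ⊂ ℝ²` be Lebesgue-null.
With the characteristic curves `γ_t(s) = (s, (c/2)s² + φ(0,t)s + t)`, for almost every
`t ∈ ℝ` one has `γ_t(s) ∉ B` for almost every `s ∈ ℝ`. -/
theorem characteristics_avoid_null_set (φ : ℝ × ℝ → ℝ) (hφ : LocallyLipschitz φ)
    (c : ℝ) (B : Set (ℝ × ℝ)) (hB : volume B = 0) :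
    ∀ᵐ t : ℝ, ∀ᵐ s : ℝ,
      ((s, c / 2 * s ^ 2 + φ (0, t) * s + t) : ℝ × ℝ) ∉ B := by
  set ψ : ℝ → ℝ := fun t => φ (0, t) with hψdef
  have hψ : LocallyLipschitz ψ := hφ.comp (LocallyLipschitz.prodMk_left (0 : ℝ))
  have hψc : Continuous ψ := hψ.continuous
  have hdiff := aux_ae_diff ψ hψ
  have hD : volume {t : ℝ | ¬ DifferentiableAt ℝ ψ t} = 0 := ae_iff.1 hdiff
  -- measurable null superset of B
  set B' := toMeasurable volume B with hB'def
  have hB'null : volume B' = 0 := by rwa [measure_toMeasurable]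
  have hB'm : MeasurableSet B' := measurableSet_toMeasurable _ _
  -- the exceptional slopes
  set Z : ℝ → Set ℝ := fun s => {t | DifferentiableAt ℝ ψ t ∧ deriv ψ t * s + 1 = 0} with hZdef
  have hZm : ∀ s, MeasurableSet (Z s) := by
    intro s
    show MeasurableSet ({t | DifferentiableAt ℝ ψ t} ∩ (fun t => deriv ψ t * s + 1) ⁻¹' {0})
    exact (measurableSet_of_differentiableAt ℝ ψ).inter
      ((((measurable_deriv ψ).mul measurable_const).add measurable_const)
        (measurableSet_singleton 0))
  have hZdisj : Pairwise (Function.onFun Disjoint Z) := by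
    intro s₁ s₂ hne
    rw [Function.onFun, Set.disjoint_left]
    rintro t ⟨hd, h1⟩ ⟨-, h2⟩
    have hdne : deriv ψ t ≠ 0 := by
      intro h0; rw [h0] at h1; norm_num at h1
    exact hne (mul_left_cancel₀ hdne (by linarith : deriv ψ t * s₁ = deriv ψ t * s₂))
  have hZcount : Set.Countable {s : ℝ | 0 < volume (Z s)} :=
    Measure.countable_meas_pos_of_disjoint_iUnion hZm hZdisj
  have hZae : ∀ᵐ s : ℝ, volume (Z s) = 0 := by
    rw [ae_iff]
    refine measure_mono_null ?_ (hZcount.measure_zero volume)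
    intro s hs
    exact pos_iff_ne_zero.2 hs
  -- the full map
  set F : ℝ × ℝ → ℝ × ℝ := fun p => (p.2, c / 2 * p.2 ^ 2 + ψ p.1 * p.2 + p.1) with hFdef
  have hFc : Continuous F := by
    refine continuous_snd.prodMk ?_
    exact ((continuous_const.mul (continuous_snd.pow 2)).add
      ((hψc.comp continuous_fst).mul continuous_snd)).add continuous_fst
  have hP : MeasurableSet (F ⁻¹' B') := hFc.measurable hB'm
  -- slices of B' are a.e. null
  have hslice : ∀ᵐ s : ℝ, volume (Prod.mk s ⁻¹' B') = 0 := by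
    have h0 : (volume.prod volume) B' = 0 := by rw [← Measure.volume_eq_prod]; exact hB'null
    have := (Measure.measure_prod_null hB'm).1 h0
    filter_upwards [this] with s hs using hs
  -- main null set computation
  have main : volume (F ⁻¹' B') = 0 := by
    rw [Measure.volume_eq_prod]
    rw [Measure.prod_apply_symm hP]
    rw [show (0 : ENNReal) = ∫⁻ (_ : ℝ), 0 from (lintegral_zero).symm]
    refine lintegral_congr_ae ?_
    filter_upwards [hslice, hZae] with s hNs hZs
    set N := Prod.mk s ⁻¹' B' with hNdef
    set g : ℝ → ℝ := fun t => c / 2 * s ^ 2 + ψ t * s + t with hgdef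
    have hset : (fun t => (t, s)) ⁻¹' (F ⁻¹' B') = g ⁻¹' N := rfl
    rw [hset]
    have hcover : g ⁻¹' N ⊆ {t : ℝ | ¬ DifferentiableAt ℝ ψ t} ∪ Z s ∪
        {t : ℝ | g t ∈ N ∧ ∃ a : ℝ, a ≠ 0 ∧ HasDerivAt g a t} := by
      intro t ht
      by_cases hd : DifferentiableAt ℝ ψ t
      · set a := deriv ψ t * s + 1 with hadef
        have hda : HasDerivAt g a t := by
          have h1 : HasDerivAt (fun u => c / 2 * s ^ 2 + ψ u * s) (deriv ψ t * s) t :=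
            (hd.hasDerivAt.mul_const s).const_add (c / 2 * s ^ 2)
          have h2 := h1.add (hasDerivAt_id' t)
          exact h2
        by_cases ha : a = 0
        · exact Or.inl (Or.inr ⟨hd, by rw [← hadef]; exact ha⟩)
        · exact Or.inr ⟨ht, a, ha, hda⟩
      · exact Or.inl (Or.inl hd)
    refine measure_mono_null hcover ?_
    refine measure_union_null (measure_union_null hD hZs) ?_
    exact aux_null_preimage g N hNs
  -- conclude
  have hae : ∀ᵐ p : ℝ × ℝ, F p ∉ B := by
    rw [ae_iff]
    refine measure_mono_null ?_ main
    intro p hp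
    simp only [Set.mem_setOf_eq, not_not] at hp
    exact subset_toMeasurable volume B hp
  rw [Measure.volume_eq_prod] at hae
  exact Measure.ae_ae_of_ae_prod hae
end

section
/- Let {(A_j, B_j)} be a countable family of pairs of measurable subsets of ℝ² with A_j ⊂ B_j and 0 < ℒ²(A_j), ℒ²(B_j∖A_j) < ∞, such that the family {A_j, B_j} is dyadic (any two of the sets are either disjoint or nested) and such that whenever B_j ⊊ B_{j'}, either B_j ⊂ A_{j'} or B_j ∩ A_{j'} = ∅. Then the one-dimensional subspaces V_{A_j,B_j} ⊂ L²(ℝ²) are pairwise orthogonal, and hence for every f ∈ L², Σ_j [ℒ²(A_j)ℒ²(B_j)/ℒ²(B_j∖A_j)]·(𝔼_{A_j} f − 𝔼_{B_j} f)² ≤ ‖f‖₂². -/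
open MeasureTheory

/-- The unit vector `e_{A,B}` spanning the one-dimensional space `V_{A,B}` of `L²`
functions vanishing outside `B`, constant on `A` and on `B∖A`, with zero integral. -/
noncomputable def eAB (A B : Set (ℝ × ℝ)) (x : ℝ × ℝ) : ℝ :=
  Set.indicator A (fun _ => Real.sqrt ((volume (B \ A)).toReal /
      ((volume A).toReal * (volume B).toReal))) x -
  Set.indicator (B \ A) (fun _ => Real.sqrt ((volume A).toReal /
      ((volume B).toReal * (volume (B \ A)).toReal))) x

/-- The average of `f` over `U`. -/
noncomputable def avg (U : Set (ℝ × ℝ)) (f : ℝ × ℝ → ℝ) : ℝ :=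
  (∫ x in U, f x) / (volume U).toReal

namespace DyadicAux

noncomputable def aa (A B : Set (ℝ × ℝ)) : ℝ :=
  Real.sqrt ((volume (B \ A)).toReal / ((volume A).toReal * (volume B).toReal))

noncomputable def bb (A B : Set (ℝ × ℝ)) : ℝ :=
  Real.sqrt ((volume A).toReal / ((volume B).toReal * (volume (B \ A)).toReal))

lemma eAB_apply (A B : Set (ℝ × ℝ)) (x : ℝ × ℝ) :
    eAB A B x = Set.indicator A (fun _ => aa A B) x -
      Set.indicator (B \ A) (fun _ => bb A B) x := rfl

lemma eAB_of_mem_A {A B : Set (ℝ × ℝ)} {x : ℝ × ℝ} (hx : x ∈ A) :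
    eAB A B x = aa A B := by
  rw [eAB_apply, Set.indicator_of_mem hx, Set.indicator_of_notMem (fun h => h.2 hx), sub_zero]

lemma eAB_of_mem_diff {A B : Set (ℝ × ℝ)} {x : ℝ × ℝ} (hx : x ∈ B \ A) :
    eAB A B x = - bb A B := by
  rw [eAB_apply, Set.indicator_of_notMem hx.2, Set.indicator_of_mem hx, zero_sub]

lemma eAB_of_not_mem {A B : Set (ℝ × ℝ)} (hAB : A ⊆ B) {x : ℝ × ℝ} (hx : x ∉ B) :
    eAB A B x = 0 := by
  rw [eAB_apply, Set.indicator_of_notMem (fun h => hx (hAB h)),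
    Set.indicator_of_notMem (fun h => hx h.1), sub_zero]

section facts

variable {A B : Set (ℝ × ℝ)} (hmA : MeasurableSet A) (hmB : MeasurableSet B)
  (hAB : A ⊆ B) (hA0 : 0 < volume A) (hBA0 : 0 < volume (B \ A)) (hBfin : volume B < ⊤)

include hAB hBfin in
lemma finA : volume A < ⊤ := (measure_mono hAB).trans_lt hBfin

include hBfin in
lemma finC : volume (B \ A) < ⊤ := (measure_mono Set.diff_subset).trans_lt hBfin

include hAB hA0 hBfin in
lemma alpha_pos : 0 < (volume A).toReal :=
  ENNReal.toReal_pos hA0.ne' (finA hAB hBfin).ne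

include hBA0 hBfin in
lemma gamma_pos : 0 < (volume (B \ A)).toReal :=
  ENNReal.toReal_pos hBA0.ne' (finC hBfin).ne

include hmA hAB hBfin in
lemma beta_eq : (volume B).toReal = (volume A).toReal + (volume (B \ A)).toReal := by
  rw [← ENNReal.toReal_add (finA hAB hBfin).ne (finC hBfin).ne]
  congr 1
  rw [measure_add_diff hmA.nullMeasurableSet B, Set.union_eq_right.2 hAB]

include hmA hAB hA0 hBfin in
lemma beta_pos : 0 < (volume B).toReal := by
  rw [beta_eq hmA hAB hBfin]
  have := alpha_pos hAB hA0 hBfin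
  have : (0:ℝ) ≤ (volume (B \ A)).toReal := ENNReal.toReal_nonneg
  linarith [alpha_pos hAB hA0 hBfin]

-- sqrt decompositions
include hA0 hBA0 hBfin hmA hAB in
lemma aa_eq : aa A B = Real.sqrt (volume (B \ A)).toReal /
    (Real.sqrt (volume A).toReal * Real.sqrt (volume B).toReal) := by
  rw [aa, Real.sqrt_div ENNReal.toReal_nonneg, Real.sqrt_mul ENNReal.toReal_nonneg]

include hA0 hBA0 hBfin hmA hAB in
lemma bb_eq : bb A B = Real.sqrt (volume A).toReal /
    (Real.sqrt (volume B).toReal * Real.sqrt (volume (B \ A)).toReal) := by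
  rw [bb, Real.sqrt_div ENNReal.toReal_nonneg, Real.sqrt_mul ENNReal.toReal_nonneg]

include hmA hAB hA0 hBA0 hBfin in
lemma zero_integral_identity :
    (volume A).toReal * aa A B - (volume (B \ A)).toReal * bb A B = 0 := by
  have hα := alpha_pos hAB hA0 hBfin
  have hβ := beta_pos hmA hAB hA0 hBfin
  have hγ := gamma_pos hBA0 hBfin
  have hsα : Real.sqrt (volume A).toReal > 0 := Real.sqrt_pos.2 hα
  have hsβ : Real.sqrt (volume B).toReal > 0 := Real.sqrt_pos.2 hβ
  have hsγ : Real.sqrt (volume (B \ A)).toReal > 0 := Real.sqrt_pos.2 hγ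
  rw [aa_eq hmA hAB hA0 hBA0 hBfin, bb_eq hmA hAB hA0 hBA0 hBfin]
  set s := Real.sqrt (volume A).toReal with hs
  set t := Real.sqrt (volume B).toReal with ht
  set u := Real.sqrt (volume (B \ A)).toReal with hu
  have hs2 : s ^ 2 = (volume A).toReal := Real.sq_sqrt hα.le
  have hu2 : u ^ 2 = (volume (B \ A)).toReal := Real.sq_sqrt hγ.le
  rw [← hs2, ← hu2]
  field_simp
  ring

include hmA hAB hA0 hBA0 hBfin in
lemma norm_identity :
    (volume A).toReal * (aa A B * aa A B) +
      (volume (B \ A)).toReal * (bb A B * bb A B) = 1 := by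
  have hα := alpha_pos hAB hA0 hBfin
  have hβ := beta_pos hmA hAB hA0 hBfin
  have hγ := gamma_pos hBA0 hBfin
  have h1 : aa A B * aa A B = (volume (B \ A)).toReal /
      ((volume A).toReal * (volume B).toReal) :=
    Real.mul_self_sqrt (by positivity)
  have h2 : bb A B * bb A B = (volume A).toReal /
      ((volume B).toReal * (volume (B \ A)).toReal) :=
    Real.mul_self_sqrt (by positivity)
  rw [h1, h2, beta_eq hmA hAB hBfin]
  field_simp
  ring

noncomputable def cc (A B : Set (ℝ × ℝ)) : ℝ :=
  Real.sqrt ((volume A).toReal * (volume B).toReal / (volume (B \ A)).toReal)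

include hmA hAB hA0 hBA0 hBfin in
lemma cc_sq : cc A B ^ 2 =
    (volume A).toReal * (volume B).toReal / (volume (B \ A)).toReal :=
  Real.sq_sqrt (by positivity)

include hmA hAB hA0 hBA0 hBfin in
lemma bb_eq_cc : bb A B = cc A B / (volume B).toReal := by
  have hα := alpha_pos hAB hA0 hBfin
  have hβ := beta_pos hmA hAB hA0 hBfin
  have hγ := gamma_pos hBA0 hBfin
  rw [bb_eq hmA hAB hA0 hBA0 hBfin, cc,
    Real.sqrt_div (by positivity), Real.sqrt_mul ENNReal.toReal_nonneg]
  set s := Real.sqrt (volume A).toReal with hs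
  set t := Real.sqrt (volume B).toReal with ht
  set u := Real.sqrt (volume (B \ A)).toReal with hu
  have hs0 : 0 < s := Real.sqrt_pos.2 hα
  have ht0 : 0 < t := Real.sqrt_pos.2 hβ
  have hu0 : 0 < u := Real.sqrt_pos.2 hγ
  have ht2 : t ^ 2 = (volume B).toReal := Real.sq_sqrt hβ.le
  rw [← ht2]
  field_simp

include hmA hAB hA0 hBA0 hBfin in
lemma aa_add_bb_eq_cc : aa A B + bb A B = cc A B / (volume A).toReal := by
  have hα := alpha_pos hAB hA0 hBfin
  have hβ := beta_pos hmA hAB hA0 hBfin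
  have hγ := gamma_pos hBA0 hBfin
  have hβeq := beta_eq hmA hAB hBfin
  rw [aa_eq hmA hAB hA0 hBA0 hBfin, bb_eq hmA hAB hA0 hBA0 hBfin, cc,
    Real.sqrt_div (by positivity), Real.sqrt_mul ENNReal.toReal_nonneg]
  set s := Real.sqrt (volume A).toReal with hs
  set t := Real.sqrt (volume B).toReal with ht
  set u := Real.sqrt (volume (B \ A)).toReal with hu
  have hs0 : 0 < s := Real.sqrt_pos.2 hα
  have ht0 : 0 < t := Real.sqrt_pos.2 hβ
  have hu0 : 0 < u := Real.sqrt_pos.2 hγ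
  have hs2 : s ^ 2 = (volume A).toReal := Real.sq_sqrt hα.le
  have ht2 : t ^ 2 = (volume B).toReal := Real.sq_sqrt hβ.le
  have hu2 : u ^ 2 = (volume (B \ A)).toReal := Real.sq_sqrt hγ.le
  have key : t ^ 2 = s ^ 2 + u ^ 2 := by rw [hs2, ht2, hu2]; exact hβeq
  rw [← hs2]
  field_simp
  linear_combination (-1 : ℝ) * key

include hmA hmB hAB hBfin in
lemma integrable_eAB : Integrable (eAB A B) volume := by
  have h1 : Integrable (Set.indicator A (fun _ => aa A B)) volume :=
    (integrable_indicator_iff hmA).2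
      (integrableOn_const (finA hAB hBfin).ne)
  have h2 : Integrable (Set.indicator (B \ A) (fun _ => bb A B)) volume :=
    (integrable_indicator_iff (hmB.diff hmA)).2
      (integrableOn_const (finC hBfin).ne)
  exact h1.sub h2

include hmA hmB hAB hA0 hBA0 hBfin in
lemma integral_eAB : ∫ x, eAB A B x = 0 := by
  have h1 : Integrable (Set.indicator A (fun _ => aa A B)) volume :=
    (integrable_indicator_iff hmA).2
      (integrableOn_const (finA hAB hBfin).ne)
  have h2 : Integrable (Set.indicator (B \ A) (fun _ => bb A B)) volume :=
    (integrable_indicator_iff (hmB.diff hmA)).2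
      (integrableOn_const (finC hBfin).ne)
  calc ∫ x, eAB A B x
      = (∫ x, Set.indicator A (fun _ => aa A B) x) -
        ∫ x, Set.indicator (B \ A) (fun _ => bb A B) x := integral_sub h1 h2
    _ = (volume A).toReal * aa A B - (volume (B \ A)).toReal * bb A B := by
        rw [integral_indicator_const _ hmA, integral_indicator_const _ (hmB.diff hmA),
          smul_eq_mul, smul_eq_mul]
        rfl
    _ = 0 := zero_integral_identity hmA hAB hA0 hBA0 hBfin

include hmA hmB hAB hBfin in
lemma memLp_eAB : MemLp (eAB A B) 2 volume := by
  have h1 : MemLp (Set.indicator A (fun _ => aa A B)) 2 volume :=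
    memLp_indicator_const 2 hmA _ (Or.inr (finA hAB hBfin).ne)
  have h2 : MemLp (Set.indicator (B \ A) (fun _ => bb A B)) 2 volume :=
    memLp_indicator_const 2 (hmB.diff hmA) _ (Or.inr (finC hBfin).ne)
  exact h1.sub h2

include hmA hmB hAB hA0 hBA0 hBfin in
lemma integral_eAB_sq : ∫ x, eAB A B x * eAB A B x = 1 := by
  have hpt : ∀ x, eAB A B x * eAB A B x =
      Set.indicator A (fun _ => aa A B * aa A B) x +
      Set.indicator (B \ A) (fun _ => bb A B * bb A B) x := by
    intro x
    by_cases hx : x ∈ A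
    · rw [eAB_of_mem_A hx, Set.indicator_of_mem hx,
        Set.indicator_of_notMem (fun h => h.2 hx), add_zero]
    · by_cases hx' : x ∈ B \ A
      · rw [eAB_of_mem_diff hx', Set.indicator_of_notMem hx,
          Set.indicator_of_mem hx', zero_add, neg_mul_neg]
      · have h0 : eAB A B x = 0 := by
          rw [eAB_apply, Set.indicator_of_notMem hx, Set.indicator_of_notMem hx',
            sub_zero]
        rw [h0, Set.indicator_of_notMem hx, Set.indicator_of_notMem hx', mul_zero,
          add_zero]
  have h1 : Integrable (Set.indicator A (fun _ => aa A B * aa A B)) volume :=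
    (integrable_indicator_iff hmA).2
      (integrableOn_const (finA hAB hBfin).ne)
  have h2 : Integrable (Set.indicator (B \ A) (fun _ => bb A B * bb A B)) volume :=
    (integrable_indicator_iff (hmB.diff hmA)).2
      (integrableOn_const (finC hBfin).ne)
  calc ∫ x, eAB A B x * eAB A B x
      = ∫ x, (Set.indicator A (fun _ => aa A B * aa A B) x +
          Set.indicator (B \ A) (fun _ => bb A B * bb A B) x) := by
        exact integral_congr_ae (Filter.Eventually.of_forall hpt)
    _ = (volume A).toReal * (aa A B * aa A B) +
        (volume (B \ A)).toReal * (bb A B * bb A B) := by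
        rw [integral_add h1 h2, integral_indicator_const _ hmA,
          integral_indicator_const _ (hmB.diff hmA), smul_eq_mul, smul_eq_mul]
        rfl
    _ = 1 := norm_identity hmA hAB hA0 hBA0 hBfin

include hmA hmB hAB hA0 hBA0 hBfin in
lemma integral_eAB_mul {f : ℝ × ℝ → ℝ} (hf : MemLp f 2 volume) :
    ∫ x, eAB A B x * f x = cc A B * (avg A f - avg B f) := by
  have hα := alpha_pos hAB hA0 hBfin
  have hβ := beta_pos hmA hAB hA0 hBfin
  haveI : Fact (volume B < ⊤) := Fact.mk hBfin
  haveI : IsFiniteMeasure (volume.restrict B) := by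
    constructor; rw [Measure.restrict_apply_univ]; exact hBfin
  have hfB : IntegrableOn f B volume := (hf.restrict B).integrable one_le_two
  have hfA : IntegrableOn f A volume := hfB.mono_set hAB
  have hfC : IntegrableOn f (B \ A) volume := hfB.mono_set Set.diff_subset
  have hpt : ∀ x, eAB A B x * f x =
      Set.indicator A (fun y => aa A B * f y) x -
      Set.indicator (B \ A) (fun y => bb A B * f y) x := by
    intro x
    rw [eAB_apply, sub_mul]
    congr 1
    · by_cases hx : x ∈ A
      · rw [Set.indicator_of_mem hx, Set.indicator_of_mem hx]
      · rw [Set.indicator_of_notMem hx, Set.indicator_of_notMem hx, zero_mul]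
    · by_cases hx : x ∈ B \ A
      · rw [Set.indicator_of_mem hx, Set.indicator_of_mem hx]
      · rw [Set.indicator_of_notMem hx, Set.indicator_of_notMem hx, zero_mul]
  have h1 : Integrable (Set.indicator A (fun y => aa A B * f y)) volume :=
    (integrable_indicator_iff hmA).2 (hfA.const_mul _)
  have h2 : Integrable (Set.indicator (B \ A) (fun y => bb A B * f y)) volume :=
    (integrable_indicator_iff (hmB.diff hmA)).2 (hfC.const_mul _)
  have hdiff : ∫ x in B \ A, f x = (∫ x in B, f x) - ∫ x in A, f x :=
    integral_diff hmA hfB hAB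
  calc ∫ x, eAB A B x * f x
      = (∫ x, Set.indicator A (fun y => aa A B * f y) x) -
        ∫ x, Set.indicator (B \ A) (fun y => bb A B * f y) x := by
        rw [← integral_sub h1 h2]
        exact integral_congr_ae (Filter.Eventually.of_forall hpt)
    _ = aa A B * (∫ x in A, f x) - bb A B * ∫ x in B \ A, f x := by
        rw [integral_indicator hmA, integral_indicator (hmB.diff hmA),
          integral_const_mul, integral_const_mul]
    _ = (aa A B + bb A B) * (∫ x in A, f x) - bb A B * ∫ x in B, f x := by
        rw [hdiff]; ring
    _ = cc A B * (avg A f - avg B f) := by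
        rw [aa_add_bb_eq_cc hmA hAB hA0 hBA0 hBfin, bb_eq_cc hmA hAB hA0 hBA0 hBfin,
          avg, avg]
        field_simp

end facts

end DyadicAux

open DyadicAux

/-- Let `(A_j, B_j)` be a countable family of pairs of measurable subsets of `ℝ²` with
`A_j ⊆ B_j`, `0 < ℒ²(A_j)`, `0 < ℒ²(B_j∖A_j)`, `ℒ²(B_j) < ∞`, such that the family of all
the sets `A_j, B_j` is dyadic (any two are disjoint or nested), the `B_j` are distinct, and
whenever `B_j ⊊ B_{j'}` one has `B_j ⊆ A_{j'}` or `B_j ∩ A_{j'} = ∅`.  Then the lines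
`V_{A_j,B_j}` are pairwise orthogonal in `L²(ℝ²)`, and by Bessel's inequality, for every
`f ∈ L²`, `Σ_j [ℒ²(A_j)ℒ²(B_j)/ℒ²(B_j∖A_j)]·(𝔼_{A_j}f − 𝔼_{B_j}f)² ≤ ‖f‖₂²`. -/
theorem dyadic_family_orthogonality_bessel (A B : ℕ → Set (ℝ × ℝ))
    (hmA : ∀ j, MeasurableSet (A j)) (hmB : ∀ j, MeasurableSet (B j))
    (hAB : ∀ j, A j ⊆ B j)
    (hA0 : ∀ j, 0 < volume (A j)) (hBA0 : ∀ j, 0 < volume (B j \ A j))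
    (hBfin : ∀ j, volume (B j) < ⊤)
    (hdyadic : ∀ S ∈ {S | ∃ j, S = A j ∨ S = B j},
      ∀ T ∈ {S | ∃ j, S = A j ∨ S = B j}, Disjoint S T ∨ S ⊆ T ∨ T ⊆ S)
    (hBinj : Function.Injective B)
    (hnest : ∀ j j', B j ⊆ B j' → B j ≠ B j' → B j ⊆ A j' ∨ Disjoint (B j) (A j')) :
    (∀ j k, j ≠ k → (∫ x, eAB (A j) (B j) x * eAB (A k) (B k) x) = 0) ∧
    ∀ f : ℝ × ℝ → ℝ, MemLp f 2 volume →
      (∑' j, (volume (A j)).toReal * (volume (B j)).toReal / (volume (B j \ A j)).toReal *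
        (avg (A j) f - avg (B j) f) ^ 2) ≤ ∫ x, (f x) ^ 2 := by
  have key : ∀ j k, B j ⊆ B k → B j ≠ B k →
      (∫ x, eAB (A j) (B j) x * eAB (A k) (B k) x) = 0 := by
    intro j k hsub hne
    rcases hnest j k hsub hne with h | h
    · have hpt : ∀ x, eAB (A j) (B j) x * eAB (A k) (B k) x =
          eAB (A j) (B j) x * aa (A k) (B k) := by
        intro x
        by_cases hx : x ∈ B j
        · rw [eAB_of_mem_A (h hx)]
        · rw [eAB_of_not_mem (hAB j) hx, zero_mul, zero_mul]
      rw [integral_congr_ae (Filter.Eventually.of_forall hpt), integral_mul_const,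
        integral_eAB (hmA j) (hmB j) (hAB j) (hA0 j) (hBA0 j) (hBfin j), zero_mul]
    · have hpt : ∀ x, eAB (A j) (B j) x * eAB (A k) (B k) x =
          eAB (A j) (B j) x * (- bb (A k) (B k)) := by
        intro x
        by_cases hx : x ∈ B j
        · rw [eAB_of_mem_diff ⟨hsub hx, Set.disjoint_left.1 h hx⟩]
        · rw [eAB_of_not_mem (hAB j) hx, zero_mul, zero_mul]
      rw [integral_congr_ae (Filter.Eventually.of_forall hpt), integral_mul_const,
        integral_eAB (hmA j) (hmB j) (hAB j) (hA0 j) (hBA0 j) (hBfin j), zero_mul]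
  have horthint : ∀ j k, j ≠ k →
      (∫ x, eAB (A j) (B j) x * eAB (A k) (B k) x) = 0 := by
    intro j k hjk
    have hne : B j ≠ B k := fun h => hjk (hBinj h)
    rcases hdyadic (B j) ⟨j, Or.inr rfl⟩ (B k) ⟨k, Or.inr rfl⟩ with hd | hsub | hsub
    · have hpt : ∀ x, eAB (A j) (B j) x * eAB (A k) (B k) x = 0 := by
        intro x
        by_cases hx : x ∈ B j
        · rw [eAB_of_not_mem (hAB k) (Set.disjoint_left.1 hd hx), mul_zero]
        · rw [eAB_of_not_mem (hAB j) hx, zero_mul]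
      rw [integral_congr_ae (Filter.Eventually.of_forall hpt), integral_zero]
    · exact key j k hsub hne
    · rw [integral_congr_ae (Filter.Eventually.of_forall
        (fun x => mul_comm (eAB (A j) (B j) x) (eAB (A k) (B k) x)))]
      exact key k j hsub hne.symm
  refine ⟨horthint, ?_⟩
  intro f hf
  have hmem : ∀ j, MemLp (eAB (A j) (B j)) 2 volume := fun j =>
    memLp_eAB (hmA j) (hmB j) (hAB j) (hBfin j)
  set g : ℕ → Lp ℝ 2 volume := fun j => (hmem j).toLp _ with hg
  have hinner : ∀ (φ ψ : ℝ × ℝ → ℝ) (hφ : MemLp φ 2 volume) (hψ : MemLp ψ 2 volume),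
      (inner ℝ (hφ.toLp φ) (hψ.toLp ψ) : ℝ) = ∫ x, φ x * ψ x := by
    intro φ ψ hφ hψ
    rw [L2.inner_def]
    refine integral_congr_ae ?_
    filter_upwards [hφ.coeFn_toLp, hψ.coeFn_toLp] with x h1 h2
    simp [h1, h2, RCLike.inner_apply, conj_trivial, mul_comm]
  have horth : Orthonormal ℝ g := by
    rw [orthonormal_iff_ite]
    intro i j
    rw [hg]
    simp only
    rw [hinner _ _ (hmem i) (hmem j)]
    by_cases hij : i = j
    · subst hij
      simp [integral_eAB_sq (hmA i) (hmB i) (hAB i) (hA0 i) (hBA0 i) (hBfin i)]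
    · simp [hij, horthint i j hij]
  have hb := horth.tsum_inner_products_le (hf.toLp f)
  have hterm : ∀ j, (volume (A j)).toReal * (volume (B j)).toReal /
      (volume (B j \ A j)).toReal * (avg (A j) f - avg (B j) f) ^ 2 =
      ‖(inner ℝ (g j) (hf.toLp f) : ℝ)‖ ^ 2 := by
    intro j
    rw [hg]
    simp only
    rw [hinner _ _ (hmem j) hf,
      integral_eAB_mul (hmA j) (hmB j) (hAB j) (hA0 j) (hBA0 j) (hBfin j) hf,
      Real.norm_eq_abs, sq_abs, mul_pow,
      cc_sq (hmA j) (hAB j) (hA0 j) (hBA0 j) (hBfin j)]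
  calc (∑' j, (volume (A j)).toReal * (volume (B j)).toReal /
        (volume (B j \ A j)).toReal * (avg (A j) f - avg (B j) f) ^ 2)
      = ∑' j, ‖(inner ℝ (g j) (hf.toLp f) : ℝ)‖ ^ 2 := tsum_congr hterm
    _ ≤ ‖hf.toLp f‖ ^ 2 := hb
    _ = ∫ x, (f x) ^ 2 := by
        rw [← real_inner_self_eq_norm_sq, hinner f f hf hf]
        exact integral_congr_ae (Filter.Eventually.of_forall fun x => (sq (f x)).symm)
end
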